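/- arXiv:1101.5332 — 2 statements merged into one kernel-verified Lean document; each statement's English description precedes it below -/
import Mathlib

section
/- Let (X,T,μ) be a measure-preserving dynamical system on a metric space, and let f: X → Y be a measurable map into a metric space (Y,d) on which the α-dimensional Hausdorff measure is σ-finite. Then for μ-almost every x, liminf_{n→∞} n^{1/α} d(f(x), f(T^n x)) < ∞. -/
open MeasureTheory Filter Metric Topology

open Set
open scoped ENNReal

/-- Extract eventual lower bounds from `liminf = ⊤`. -/
lemma bosh_liminf_top {u : ℕ → ℝ≥0∞} (h : liminf u atTop = ⊤) (b : ℝ≥0∞) (hb : b ≠ ⊤) :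
    ∃ N : ℕ, ∀ n, N ≤ n → b ≤ u n := by
  have h1 : b < ⨆ n : ℕ, ⨅ i ≥ n, u i := by
    rw [← Filter.liminf_eq_iSup_iInf_of_nat, h]; exact hb.lt_top
  obtain ⟨N, hN⟩ := lt_iSup_iff.mp h1
  exact ⟨N, fun n hn => le_trans hN.le (iInf₂_le n hn)⟩

/-- If `B` does not return to itself at any time `1 ≤ n ≤ K`, then `μ B ≤ (K+1)⁻¹`. -/
lemma bosh_disj {X : Type*} [MeasurableSpace X] {μ : Measure X} [IsProbabilityMeasure μ]
    {T : X → X} (hT : MeasurePreserving T μ μ) {B : Set X} (hB : MeasurableSet B) (K : ℕ)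
    (h : ∀ n, 1 ≤ n → n ≤ K → ∀ x ∈ B, T^[n] x ∈ B → False) :
    μ B ≤ ((K : ℝ≥0∞) + 1)⁻¹ := by
  have hdisj : ∀ a b : ℕ, a < b → b ≤ K → Disjoint (T^[a] ⁻¹' B) (T^[b] ⁻¹' B) := by
    intro a b hab hbK
    rw [Set.disjoint_left]
    intro x hxa hxb
    have hba : b - a + a = b := Nat.sub_add_cancel hab.le
    have : T^[b - a] (T^[a] x) ∈ B := by
      rw [← Function.iterate_add_apply, hba]; exact hxb
    exact h (b - a) (by omega) (by omega) _ hxa this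
  have hpd : (↑(Finset.range (K + 1)) : Set ℕ).PairwiseDisjoint (fun n => T^[n] ⁻¹' B) := by
    intro a ha b hb hab
    rcases lt_or_gt_of_ne hab with h' | h'
    · exact hdisj a b h' (Nat.lt_succ_iff.mp (Finset.mem_range.mp hb))
    · exact (hdisj b a h' (Nat.lt_succ_iff.mp (Finset.mem_range.mp ha))).symm
  have hmeas : ∀ n ∈ Finset.range (K + 1), MeasurableSet (T^[n] ⁻¹' B) :=
    fun n _ => hB.preimage (hT.measurable.iterate n)
  have hsum : ∑ n ∈ Finset.range (K + 1), μ (T^[n] ⁻¹' B) ≤ 1 := by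
    rw [← measure_biUnion_finset hpd hmeas]
    exact prob_le_one
  have heq : ∀ n, μ (T^[n] ⁻¹' B) = μ B :=
    fun n => (hT.iterate n).measure_preimage hB.nullMeasurableSet
  have : ((K + 1 : ℕ) : ℝ≥0∞) * μ B ≤ 1 := by
    calc ((K + 1 : ℕ) : ℝ≥0∞) * μ B = ∑ _n ∈ Finset.range (K + 1), μ B := by
          rw [Finset.sum_const, Finset.card_range, nsmul_eq_mul]
      _ = ∑ n ∈ Finset.range (K + 1), μ (T^[n] ⁻¹' B) := by
          exact (Finset.sum_congr rfl fun n _ => (heq n).symm)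
      _ ≤ 1 := hsum
  rw [ENNReal.le_inv_iff_mul_le]
  calc μ B * ((K : ℝ≥0∞) + 1) = ((K + 1 : ℕ) : ℝ≥0∞) * μ B := by push_cast; ring
    _ ≤ 1 := this

/-- Existence of good covers at a given scale, by closed sets. -/
lemma bosh_cover {Y : Type*} [MetricSpace Y] [MeasurableSpace Y] [BorelSpace Y]
    {α : ℝ} (hα : 0 < α) {s : Set Y} (hs : μH[α] s ≠ ⊤) {r : ℝ≥0∞} (hr : 0 < r) :
    ∃ t : ℕ → Set Y, (∀ i, IsClosed (t i)) ∧ s ⊆ ⋃ i, t i ∧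
      (∀ i, EMetric.diam (t i) ≤ r) ∧ ∑' i, EMetric.diam (t i) ^ α ≤ μH[α] s + 1 := by
  have hlt : (⨅ (t : ℕ → Set Y) (_ : s ⊆ ⋃ n, t n) (_ : ∀ n, EMetric.diam (t n) ≤ r),
      ∑' n, ⨆ _ : (t n).Nonempty, EMetric.diam (t n) ^ α) < μH[α] s + 1 := by
    refine lt_of_le_of_lt ?_ (ENNReal.lt_add_right hs one_ne_zero)
    rw [MeasureTheory.Measure.hausdorffMeasure_apply]
    exact le_iSup₂ (f := fun (r' : ℝ≥0∞) (_ : 0 < r') =>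
      ⨅ (t : ℕ → Set Y) (_ : s ⊆ ⋃ n, t n) (_ : ∀ n, EMetric.diam (t n) ≤ r'),
        ∑' n, ⨆ _ : (t n).Nonempty, EMetric.diam (t n) ^ α) r hr
  obtain ⟨t, ht⟩ := iInf_lt_iff.mp hlt
  obtain ⟨hcov, ht⟩ := iInf_lt_iff.mp ht
  obtain ⟨hdiam, hsum⟩ := iInf_lt_iff.mp ht
  have hsum' : ∑' n, EMetric.diam (t n) ^ α ≤ μH[α] s + 1 := by
    refine le_trans (le_of_eq ?_) hsum.le
    refine tsum_congr fun n => ?_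
    rcases Set.eq_empty_or_nonempty (t n) with he | hne
    · simp [he, EMetric.diam, Metric.ediam_empty, ENNReal.zero_rpow_of_pos hα]
    · simp [hne]
  refine ⟨fun i => closure (t i), fun i => isClosed_closure,
    hcov.trans (Set.iUnion_mono fun i => subset_closure), ?_, ?_⟩
  · intro i; rw [EMetric.diam, Metric.ediam_closure]; exact hdiam i
  · simpa only [EMetric.diam, Metric.ediam_closure] using hsum'

/-- The set of points of `f ⁻¹' E` that do not return to `f ⁻¹' E` within the time window
dictated by the diameter of `E` and the parameter `c`. -/
def boshD {X : Type*} {Y : Type*} [MetricSpace Y] (T : X → X) (f : X → Y) (α : ℝ)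
    (c : ℝ≥0∞) (E : Set Y) : Set X :=
  f ⁻¹' E ∩ ⋂ (n : ℕ) (_ : 1 ≤ n ∧ (n : ℝ≥0∞) ^ (1/α) * (2 * EMetric.diam E) ≤ c),
    (fun x => f (T^[n] x)) ⁻¹' Eᶜ

lemma boshD_measurable {X : Type*} [MeasurableSpace X] {Y : Type*} [MetricSpace Y]
    [MeasurableSpace Y] [BorelSpace Y] {T : X → X} {f : X → Y} (hT : Measurable T)
    (hf : Measurable f) (α : ℝ) (c : ℝ≥0∞) {E : Set Y} (hE : MeasurableSet E) :
    MeasurableSet (boshD T f α c E) := by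
  refine (hE.preimage hf).inter (MeasurableSet.iInter fun n => MeasurableSet.iInter fun _ =>
    hE.compl.preimage (hf.comp (hT.iterate n)))

lemma boshD_bound {X : Type*} [MeasurableSpace X] {Y : Type*} [MetricSpace Y]
    [MeasurableSpace Y] [BorelSpace Y] {μ : Measure X} [IsProbabilityMeasure μ]
    {T : X → X} (hT : MeasurePreserving T μ μ) {f : X → Y} (hf : Measurable f)
    {α : ℝ} (hα : 0 < α) {c : ℝ≥0∞} (hc1 : 1 ≤ c) (hctop : c ≠ ⊤)
    {E : Set Y} (hE : MeasurableSet E) :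
    μ (boshD T f α c E) ≤ 2^α * (EMetric.diam E)^α * ((c^α)⁻¹) := by
  set e := EMetric.diam E with he
  have hcα : c^α ≠ ⊤ := (ENNReal.rpow_lt_top_of_nonneg hα.le hctop).ne
  have key : ∀ K : ℕ, (∀ n : ℕ, 1 ≤ n → n ≤ K → (n : ℝ≥0∞) ^ (1/α) * (2 * e) ≤ c) →
      μ (boshD T f α c E) ≤ ((K : ℝ≥0∞) + 1)⁻¹ := by
    intro K hK
    refine bosh_disj hT (boshD_measurable hT.measurable hf α c hE) K ?_
    intro n hn1 hnK x hx hx'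
    have h1 : f (T^[n] x) ∈ E := hx'.1
    have h2 : f (T^[n] x) ∈ Eᶜ := by
      have := hx.2
      rw [Set.mem_iInter] at this
      have := this n
      rw [Set.mem_iInter] at this
      exact this ⟨hn1, hK n hn1 hnK⟩
    exact h2 h1
  by_cases hetop : e = ⊤
  · -- RHS is ⊤
    have : 2^α * e^α * ((c^α)⁻¹) = ⊤ := by
      rw [hetop, ENNReal.top_rpow_of_pos hα, ENNReal.mul_top
        (by simp [ENNReal.rpow_eq_zero_iff]), ENNReal.top_mul
        (by simp [ENNReal.inv_ne_zero, hcα])]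
    rw [this]; exact le_top
  by_cases he0 : e = 0
  · -- μ D = 0
    have hK : ∀ K : ℕ, μ (boshD T f α c E) ≤ ((K : ℝ≥0∞) + 1)⁻¹ := by
      intro K
      refine key K fun n _ _ => ?_
      rw [he0, mul_zero, mul_zero]
      exact zero_le
    have hD0 : μ (boshD T f α c E) = 0 := by
      by_contra h0
      obtain ⟨K, hKlt⟩ := ENNReal.exists_nat_gt (ENNReal.inv_ne_top.mpr h0)
      have h1 : ((K : ℝ≥0∞))⁻¹ < μ (boshD T f α c E) := ENNReal.inv_lt_iff_inv_lt.mp hKlt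
      have h2 : μ (boshD T f α c E) ≤ ((K : ℝ≥0∞))⁻¹ :=
        (hK K).trans (ENNReal.inv_le_inv.mpr (le_self_add))
      exact absurd (h1.trans_le h2) (lt_irrefl _)
    rw [hD0]; exact zero_le
  · -- main case
    have h2e0 : 2 * e ≠ 0 := by simp [he0]
    have h2etop : 2 * e ≠ ⊤ := ENNReal.mul_ne_top ENNReal.ofNat_ne_top hetop
    set β := (c / (2*e))^α with hβ
    have hβtop : β ≠ ⊤ :=
      (ENNReal.rpow_lt_top_of_nonneg hα.le (ENNReal.div_lt_top hctop h2e0).ne).ne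
    set K := ⌊β.toReal⌋₊ with hKdef
    have hwin : ∀ n : ℕ, 1 ≤ n → n ≤ K → (n : ℝ≥0∞) ^ (1/α) * (2 * e) ≤ c := by
      intro n _ hnK
      have h1 : (n : ℝ≥0∞) ≤ β := by
        have h : (n : ℝ) ≤ β.toReal :=
          le_trans (Nat.cast_le.mpr hnK) (Nat.floor_le ENNReal.toReal_nonneg)
        calc (n : ℝ≥0∞) = ENNReal.ofReal (n : ℝ) := (ENNReal.ofReal_natCast n).symm
          _ ≤ ENNReal.ofReal β.toReal := ENNReal.ofReal_le_ofReal h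
          _ = β := ENNReal.ofReal_toReal hβtop
      have h2 : (n : ℝ≥0∞)^(1/α) ≤ c / (2*e) := by
        calc (n : ℝ≥0∞)^(1/α) ≤ β^(1/α) := ENNReal.rpow_le_rpow h1 (by positivity)
          _ = c / (2*e) := by
            rw [hβ, ← ENNReal.rpow_mul, mul_one_div_cancel hα.ne', ENNReal.rpow_one]
      calc (n : ℝ≥0∞)^(1/α) * (2*e) ≤ c / (2*e) * (2*e) := mul_le_mul_left h2 _
        _ = c := ENNReal.div_mul_cancel h2e0 h2etop
    have hμ : μ (boshD T f α c E) ≤ ((K : ℝ≥0∞) + 1)⁻¹ := key K hwin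
    have hβK : β ≤ (K : ℝ≥0∞) + 1 := by
      calc β = ENNReal.ofReal β.toReal := (ENNReal.ofReal_toReal hβtop).symm
        _ ≤ ENNReal.ofReal ((K : ℝ) + 1) := ENNReal.ofReal_le_ofReal (Nat.lt_floor_add_one _).le
        _ = (K : ℝ≥0∞) + 1 := by
          rw [ENNReal.ofReal_add (by positivity) zero_le_one, ENNReal.ofReal_natCast,
            ENNReal.ofReal_one]
    refine (hμ.trans (ENNReal.inv_le_inv.mpr hβK)).trans (le_of_eq ?_)
    rw [hβ, ← ENNReal.inv_rpow, ENNReal.inv_div (Or.inl h2etop) (Or.inl h2e0),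
      ENNReal.div_rpow_of_nonneg _ _ hα.le, ENNReal.mul_rpow_of_nonneg _ _ hα.le,
      div_eq_mul_inv]

/-- **Boshernitzan's theorem.** If the α-dimensional Hausdorff measure is σ-finite on `Y`,
then for a measure-preserving system `(X, T, μ)` and a measurable observation `f : X → Y`,
for μ-a.e. `x`, `liminf_n n^(1/α) d(f x, f (Tⁿ x)) < ∞`. -/
theorem boshernitzan
    {X : Type*} [MeasurableSpace X]
    {Y : Type*} [MetricSpace Y] [MeasurableSpace Y] [BorelSpace Y]
    (μ : Measure X) [IsProbabilityMeasure μ]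
    (T : X → X) (hT : MeasurePreserving T μ μ)
    (f : X → Y) (hf : Measurable f)
    (α : ℝ) (hα : 0 < α)
    (hY : SigmaFinite (μH[α] : Measure Y)) :
    ∀ᵐ x ∂μ,
      Filter.liminf
        (fun n : ℕ => ENNReal.ofReal ((n : ℝ) ^ (1 / α) * dist (f x) (f (T^[n] x))))
        Filter.atTop < ⊤ := by
  classical
  haveI := hY
  have hTm : Measurable T := hT.measurable
  set g : X → ℕ → ℝ≥0∞ := fun x n => (n : ℝ≥0∞) ^ (1/α) * edist (f x) (f (T^[n] x)) with hg
  have hgeq : ∀ x, (fun n : ℕ =>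
      ENNReal.ofReal ((n : ℝ) ^ (1 / α) * dist (f x) (f (T^[n] x)))) = g x := by
    intro x; funext n
    rw [ENNReal.ofReal_mul (by positivity), ← ENNReal.ofReal_rpow_of_nonneg (Nat.cast_nonneg n)
      (by positivity : (0:ℝ) ≤ 1/α), ENNReal.ofReal_natCast, ← edist_dist]
  set Yk : ℕ → Set Y := spanningSets (μH[α] : Measure Y) with hYkdef
  have hYkfin : ∀ k, μH[α] (Yk k) ≠ ⊤ := fun k => (measure_spanningSets_lt_top _ k).ne
  have hrpos : ∀ j : ℕ, (0:ℝ≥0∞) < (2 * ((j:ℝ≥0∞)+1))⁻¹ := by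
    intro j
    refine ENNReal.inv_pos.mpr (ENNReal.mul_ne_top ENNReal.ofNat_ne_top (by simp))
  choose t tcl tcov tdiam tsum using
    fun (k j : ℕ) => bosh_cover hα (hYkfin k) (hrpos j)
  set U : ℕ → ℕ → ℕ → Set X := fun c k j => ⋃ i, boshD T f α ((c:ℕ) : ℝ≥0∞) (t k j i) with hU
  set V : ℕ → Set X := fun k => ⋂ (c : ℕ), ⋃ J, ⋂ j, ⋂ (_ : J ≤ j), U (c+1) k j with hV
  have hUmeas : ∀ c k j, MeasurableSet (U c k j) := fun c k j =>
    MeasurableSet.iUnion fun i => boshD_measurable hTm hf α _ (tcl k j i).measurableSet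
  have hVmeas : ∀ k, MeasurableSet (V k) := fun k =>
    MeasurableSet.iInter fun c => MeasurableSet.iUnion fun J =>
      MeasurableSet.iInter fun j => MeasurableSet.iInter fun _ => hUmeas (c+1) k j
  have hUbound : ∀ (c k j : ℕ), 1 ≤ c →
      μ (U c k j) ≤ 2^α * (μH[α] (Yk k) + 1) * ((((c:ℕ):ℝ≥0∞)^α)⁻¹) := by
    intro c k j hc
    have hc1 : (1:ℝ≥0∞) ≤ ((c:ℕ):ℝ≥0∞) := by exact_mod_cast hc
    have hctop : ((c:ℕ):ℝ≥0∞) ≠ ⊤ := by simp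
    calc μ (U c k j) ≤ ∑' i, μ (boshD T f α ((c:ℕ):ℝ≥0∞) (t k j i)) := measure_iUnion_le _
      _ ≤ ∑' i, 2^α * (EMetric.diam (t k j i))^α * ((((c:ℕ):ℝ≥0∞)^α)⁻¹) :=
          ENNReal.tsum_le_tsum fun i => boshD_bound hT hf hα hc1 hctop (tcl k j i).measurableSet
      _ = 2^α * (∑' i, (EMetric.diam (t k j i))^α) * ((((c:ℕ):ℝ≥0∞)^α)⁻¹) := by
          rw [ENNReal.tsum_mul_right, ENNReal.tsum_mul_left]
      _ ≤ 2^α * (μH[α] (Yk k) + 1) * ((((c:ℕ):ℝ≥0∞)^α)⁻¹) := by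
          exact mul_le_mul_left (mul_le_mul_right (tsum k j) _) _
  have hV0 : ∀ k, μ (V k) = 0 := by
    intro k
    refine le_antisymm ?_ zero_le
    refine ENNReal.le_of_forall_pos_le_add fun ε hε _ => ?_
    rw [zero_add]
    have hnum0 : (2:ℝ≥0∞)^α * (μH[α] (Yk k) + 1) ≠ 0 := by
      refine mul_ne_zero ?_ (by simp)
      simp [ENNReal.rpow_eq_zero_iff]
    have hnumtop : (2:ℝ≥0∞)^α * (μH[α] (Yk k) + 1) ≠ ⊤ :=
      ENNReal.mul_ne_top (ENNReal.rpow_lt_top_of_nonneg hα.le ENNReal.ofNat_ne_top).ne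
        (by simp [hYkfin k])
    set A := (2^α * (μH[α] (Yk k) + 1)) / (ε : ℝ≥0∞) with hA
    have hAtop : A ≠ ⊤ := (ENNReal.div_lt_top hnumtop (by exact_mod_cast hε.ne')).ne
    have hA1top : A^(1/α) ≠ ⊤ := (ENNReal.rpow_lt_top_of_nonneg (by positivity) hAtop).ne
    obtain ⟨c, hc⟩ := ENNReal.exists_nat_gt hA1top
    have h1 : μ (V k) ≤ μ (⋃ J, ⋂ j, ⋂ (_ : J ≤ j), U (c+1) k j) :=
      measure_mono (Set.iInter_subset _ c)
    have hmono : Monotone fun J => ⋂ j, ⋂ (_ : J ≤ j), U (c+1) k j := by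
      intro J J' hJJ'
      exact Set.iInter₂_mono' fun j hj => ⟨j, hJJ'.trans hj, le_rfl⟩
    have h2 : μ (⋃ J, ⋂ j, ⋂ (_ : J ≤ j), U (c+1) k j)
        = ⨆ J, μ (⋂ j, ⋂ (_ : J ≤ j), U (c+1) k j) :=
      Directed.measure_iUnion hmono.directed_le
    have h3 : ∀ J, μ (⋂ j, ⋂ (_ : J ≤ j), U (c+1) k j)
        ≤ 2^α * (μH[α] (Yk k) + 1) * (((((c+1:ℕ)):ℝ≥0∞)^α)⁻¹) := fun J =>
      (measure_mono (Set.iInter₂_subset J le_rfl)).trans (hUbound (c+1) k J (by omega))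
    have h4 : 2^α * (μH[α] (Yk k) + 1) * (((((c+1:ℕ)):ℝ≥0∞)^α)⁻¹) ≤ ε := by
      have hcA : A ≤ (((c+1:ℕ)):ℝ≥0∞)^α := by
        have h5 : A^(1/α) ≤ (((c+1:ℕ)):ℝ≥0∞) := by
          refine hc.le.trans ?_
          exact_mod_cast Nat.le_succ c
        calc A = (A^(1/α))^α := by
              rw [← ENNReal.rpow_mul, one_div_mul_cancel hα.ne', ENNReal.rpow_one]
          _ ≤ (((c+1:ℕ)):ℝ≥0∞)^α := ENNReal.rpow_le_rpow h5 hα.le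
      calc 2^α * (μH[α] (Yk k) + 1) * (((((c+1:ℕ)):ℝ≥0∞)^α)⁻¹)
          ≤ 2^α * (μH[α] (Yk k) + 1) * A⁻¹ :=
            mul_le_mul_right (ENNReal.inv_le_inv.mpr hcA) _
        _ = ε := by
            rw [hA, ENNReal.inv_div (Or.inl (by simp : (ε:ℝ≥0∞) ≠ ⊤)) (Or.inl (by exact_mod_cast hε.ne')),
              ENNReal.mul_div_cancel hnum0 hnumtop]
    calc μ (V k) ≤ _ := h1
      _ = _ := h2
      _ ≤ 2^α * (μH[α] (Yk k) + 1) * (((((c+1:ℕ)):ℝ≥0∞)^α)⁻¹) := iSup_le h3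
      _ ≤ ε := h4
  -- the inclusion
  have hincl : {x | liminf (g x) atTop = ⊤} ⊆ ⋃ k, ⋃ m, T^[m] ⁻¹' (V k) := by
    intro x hx
    simp only [Set.mem_setOf_eq] at hx
    obtain ⟨k, hk⟩ : ∃ k, f x ∈ Yk k := by
      have h := MeasureTheory.iUnion_spanningSets (μH[α] : Measure Y)
      have h2 : f x ∈ ⋃ i, spanningSets (μH[α] : Measure Y) i := by
        rw [h]; exact Set.mem_univ _
      exact Set.mem_iUnion.mp h2
    obtain ⟨N₁, hN₁⟩ := bosh_liminf_top hx 1 ENNReal.one_ne_top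
    have hPbig : ∀ n, N₁ ≤ n → f (T^[n] x) ≠ f x := by
      intro n hn heq
      have h1 : (1:ℝ≥0∞) ≤ g x n := hN₁ n hn
      have h0 : edist (f x) (f (T^[n] x)) = 0 := by rw [heq, edist_self]
      rw [hg] at h1
      simp only [h0, mul_zero] at h1
      exact absurd h1 (by simp)
    set P : ℕ → Prop := fun n => f (T^[n] x) = f x with hPdef
    set n₀ := Nat.findGreatest P N₁ with hn₀def
    have hn₀P : f (T^[n₀] x) = f x :=
      Nat.findGreatest_spec (P := P) (Nat.zero_le N₁) (by simp [hPdef])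
    have hn₀max : ∀ m, 1 ≤ m → f (T^[n₀ + m] x) ≠ f x := by
      intro m hm heq
      by_cases hcase : n₀ + m ≤ N₁
      · refine Nat.findGreatest_is_greatest (P := P) ?_ hcase heq
        omega
      · exact hPbig _ (by omega) heq
    have hn₀le : n₀ ≤ N₁ := Nat.findGreatest_le N₁
    refine Set.mem_iUnion.mpr ⟨k, Set.mem_iUnion.mpr ⟨n₀, ?_⟩⟩
    simp only [Set.mem_preimage, hV, Set.mem_iInter]
    intro c
    set z := T^[n₀] x with hzdef
    have hfz : f z = f x := hn₀P
    set cc : ℝ≥0∞ := ((c+1 : ℕ) : ℝ≥0∞) with hccdef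
    have hcctop : cc ≠ ⊤ := by simp [hccdef]
    have hcc1 : (1:ℝ≥0∞) ≤ cc := by
      rw [hccdef]; exact_mod_cast Nat.succ_le_succ (Nat.zero_le c)
    obtain ⟨N₂, hN₂⟩ := bosh_liminf_top hx (2 * cc)
      (ENNReal.mul_ne_top ENNReal.ofNat_ne_top hcctop)
    set N := max N₁ N₂ + n₀ + 1 with hNdef
    set F := (Finset.range N).filter (fun n => 1 ≤ n ∧ f (T^[n] x) ≠ f x) with hFdef
    set ε₀ : ℝ≥0∞ := F.inf (fun n => edist (f x) (f (T^[n] x))) with hε₀def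
    have hε₀pos : 0 < ε₀ := by
      rw [hε₀def]
      refine (Finset.lt_inf_iff (by simp : (0:ℝ≥0∞) < ⊤)).mpr ?_
      intro n hn
      have hne := (Finset.mem_filter.mp hn).2.2
      exact pos_iff_ne_zero.mpr fun h0 => hne (edist_eq_zero.mp h0).symm
    obtain ⟨J₁, hJ₁⟩ := ENNReal.exists_nat_gt (ENNReal.inv_ne_top.mpr hε₀pos.ne')
    have h4α1 : (1:ℝ≥0∞) < (4:ℝ≥0∞)^α := by
      calc (1:ℝ≥0∞) = 1^α := (ENNReal.one_rpow α).symm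
        _ < 4^α := ENNReal.rpow_lt_rpow (by norm_num) hα
    have h4αtop : (4:ℝ≥0∞)^α ≠ ⊤ :=
      (ENNReal.rpow_lt_top_of_nonneg hα.le (by norm_num)).ne
    have hsub0 : (4:ℝ≥0∞)^α - 1 ≠ 0 := (tsub_pos_of_lt h4α1).ne'
    have hsubtop : (4:ℝ≥0∞)^α - 1 ≠ ⊤ := ((tsub_le_self).trans_lt h4αtop.lt_top).ne
    set C : ℝ≥0∞ := ((N:ℝ≥0∞) + 1) / ((4:ℝ≥0∞)^α - 1) with hCdef
    have hCtop : C ≠ ⊤ := (ENNReal.div_lt_top (by simp) hsub0).ne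
    have hC1top : C^(1/α) ≠ ⊤ := (ENNReal.rpow_lt_top_of_nonneg (by positivity) hCtop).ne
    obtain ⟨J₂, hJ₂⟩ := ENNReal.exists_nat_gt hC1top
    refine Set.mem_iUnion.mpr ⟨max J₁ J₂, Set.mem_iInter.mpr fun j =>
      Set.mem_iInter.mpr fun hj => ?_⟩
    have hzY : f z ∈ Yk k := hfz ▸ hk
    obtain ⟨Ei, hEi⟩ := Set.mem_iUnion.mp (tcov k j hzY)
    refine Set.mem_iUnion.mpr ⟨Ei, ?_⟩
    set E := t k j Ei with hEdef
    set e := EMetric.diam E with hediamdef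
    refine ⟨hEi, Set.mem_iInter.mpr fun n => Set.mem_iInter.mpr fun hcond => ?_⟩
    obtain ⟨hn1, hwin⟩ := hcond
    simp only [Set.mem_preimage, Set.mem_compl_iff]
    intro hmem
    set tt := n₀ + n with httdef
    have hfeq : f (T^[n] z) = f (T^[tt] x) := by
      rw [hzdef, ← Function.iterate_add_apply, Nat.add_comm]
    have hne : f (T^[tt] x) ≠ f x := hn₀max n hn1
    have hfzE : f z ∈ E := hEi
    have hdle : edist (f x) (f (T^[tt] x)) ≤ e := by
      rw [← hfz, ← hfeq]
      exact EMetric.edist_le_diam_of_mem hfzE hmem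
    have hd0 : edist (f x) (f (T^[tt] x)) ≠ 0 := fun h0 => hne (edist_eq_zero.mp h0).symm
    have hediam : e ≤ (2 * ((j:ℝ≥0∞)+1))⁻¹ := tdiam k j Ei
    by_cases httN : tt < N
    · have htF : tt ∈ F := Finset.mem_filter.mpr ⟨Finset.mem_range.mpr httN, by omega, hne⟩
      have h1 : ε₀ ≤ edist (f x) (f (T^[tt] x)) := Finset.inf_le htF
      have h2 : (2 * ((j:ℝ≥0∞)+1))⁻¹ < ε₀ := by
        rw [ENNReal.inv_lt_iff_inv_lt]
        calc ε₀⁻¹ < (J₁ : ℝ≥0∞) := hJ₁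
          _ ≤ ((j:ℝ≥0∞)) := Nat.cast_le.mpr (le_trans (le_max_left _ _) hj)
          _ ≤ (j:ℝ≥0∞) + 1 := le_self_add
          _ = 1 * ((j:ℝ≥0∞) + 1) := (one_mul _).symm
          _ ≤ 2 * ((j:ℝ≥0∞)+1) := mul_le_mul_left one_le_two _
      exact absurd ((h1.trans hdle).trans hediam) (not_le.mpr h2)
    · push_neg at httN
      have hgx : 2 * cc ≤ g x tt := hN₂ tt (by omega)
      have he0 : e ≠ 0 := by
        intro h0
        exact hd0 (le_zero_iff.mp (h0 ▸ hdle))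
      have hetop : e ≠ ⊤ := by
        refine (hediam.trans_lt ?_).ne
        exact ENNReal.inv_lt_top.mpr (ENNReal.mul_pos two_ne_zero (by simp))
      have h2e0 : 2 * e ≠ 0 := by simp [he0]
      have h2etop : 2 * e ≠ ⊤ := ENNReal.mul_ne_top ENNReal.ofNat_ne_top hetop
      set u := cc / (2*e) with hudef
      have hu1 : (n:ℝ≥0∞) ≤ u^α := by
        have h1 : (n:ℝ≥0∞)^(1/α) ≤ u := by
          rw [hudef]
          exact (ENNReal.le_div_iff_mul_le (Or.inl h2e0) (Or.inl h2etop)).mpr hwin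
        calc (n:ℝ≥0∞) = ((n:ℝ≥0∞)^(1/α))^α := by
              rw [← ENNReal.rpow_mul, one_div_mul_cancel hα.ne', ENNReal.rpow_one]
          _ ≤ u^α := ENNReal.rpow_le_rpow h1 hα.le
      have hu2 : (4:ℝ≥0∞)^α * u^α ≤ (tt:ℝ≥0∞) := by
        have h1 : 2*cc ≤ (tt:ℝ≥0∞)^(1/α) * e := by
          refine hgx.trans ?_
          rw [hg]
          exact mul_le_mul_right hdle _
        have h2 : (2*cc)/e ≤ (tt:ℝ≥0∞)^(1/α) :=
          (ENNReal.div_le_iff_le_mul (Or.inl he0) (Or.inl hetop)).mpr h1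
        have h3 : ((2*cc)/e)^α ≤ (tt:ℝ≥0∞) := by
          calc ((2*cc)/e)^α ≤ ((tt:ℝ≥0∞)^(1/α))^α := ENNReal.rpow_le_rpow h2 hα.le
            _ = (tt:ℝ≥0∞) := by
              rw [← ENNReal.rpow_mul, one_div_mul_cancel hα.ne', ENNReal.rpow_one]
        refine le_trans (le_of_eq ?_) h3
        rw [← ENNReal.mul_rpow_of_nonneg _ _ hα.le]
        congr 1
        rw [hudef, ← mul_div_assoc, show (4:ℝ≥0∞)*cc = 2*(2*cc) by ring,
          ENNReal.mul_div_mul_left _ _ two_ne_zero ENNReal.ofNat_ne_top]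
      have hu3 : C^(1/α) < u := by
        have ha : 2*e ≤ ((j:ℝ≥0∞)+1)⁻¹ := by
          calc 2*e ≤ 2*(2*((j:ℝ≥0∞)+1))⁻¹ := mul_le_mul_right hediam 2
            _ = ((j:ℝ≥0∞)+1)⁻¹ := by
              rw [ENNReal.mul_inv (Or.inl two_ne_zero) (Or.inl ENNReal.ofNat_ne_top),
                ← mul_assoc, ENNReal.mul_inv_cancel two_ne_zero ENNReal.ofNat_ne_top, one_mul]
        have hb : ((j:ℝ≥0∞)+1) ≤ (2*e)⁻¹ := by
          have := ENNReal.inv_le_inv.mpr ha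
          rwa [inv_inv] at this
        calc C^(1/α) < (J₂ : ℝ≥0∞) := hJ₂
          _ ≤ (j:ℝ≥0∞) := Nat.cast_le.mpr (le_trans (le_max_right _ _) hj)
          _ ≤ (j:ℝ≥0∞) + 1 := le_self_add
          _ ≤ (2*e)⁻¹ := hb
          _ = 1 * (2*e)⁻¹ := (one_mul _).symm
          _ ≤ cc * (2*e)⁻¹ := mul_le_mul_left hcc1 _
          _ = u := by rw [hudef, div_eq_mul_inv]
      have hCu : (N:ℝ≥0∞) + 1 ≤ ((4:ℝ≥0∞)^α - 1) * u^α := by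
        have h1 : C ≤ u^α := by
          calc C = (C^(1/α))^α := by
                rw [← ENNReal.rpow_mul, one_div_mul_cancel hα.ne', ENNReal.rpow_one]
            _ ≤ u^α := ENNReal.rpow_le_rpow hu3.le hα.le
        calc (N:ℝ≥0∞)+1 = ((4:ℝ≥0∞)^α - 1) * C := by
              rw [hCdef, ENNReal.mul_div_cancel hsub0 hsubtop]
          _ ≤ ((4:ℝ≥0∞)^α - 1) * u^α := mul_le_mul_right h1 _
      have hfin : ((n:ℝ≥0∞)) + ((N:ℝ≥0∞)+1) ≤ (tt:ℝ≥0∞) := by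
        calc ((n:ℝ≥0∞)) + ((N:ℝ≥0∞)+1) ≤ u^α + ((4:ℝ≥0∞)^α - 1) * u^α := add_le_add hu1 hCu
          _ = (1 + ((4:ℝ≥0∞)^α - 1)) * u^α := by rw [add_mul, one_mul]
          _ = (4:ℝ≥0∞)^α * u^α := by rw [add_tsub_cancel_of_le h4α1.le]
          _ ≤ (tt:ℝ≥0∞) := hu2
      have hnat : n + (N + 1) ≤ tt := by exact_mod_cast hfin
      omega
  have hnull : μ (⋃ k, ⋃ m, T^[m] ⁻¹' (V k)) = 0 := by
    refine measure_iUnion_null fun k => measure_iUnion_null fun m => ?_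
    rw [(hT.iterate m).measure_preimage (hVmeas k).nullMeasurableSet]
    exact hV0 k
  refine measure_mono_null ?_ hnull
  intro x hx
  apply hincl
  simp only [Set.mem_setOf_eq] at hx ⊢
  rw [← hgeq x]
  exact top_le_iff.mp (not_lt.mp hx)
end

section
/- Every Borel probability measure on ℝ^N is weakly diametrically regular: for any η > 1, for μ-almost every x and every ε > 0, there exists δ > 0 such that for all r < δ, μ(B(x, ηr)) ≤ μ(B(x,r)) · r^{-ε}. -/
open MeasureTheory Filter Metric Topology

open scoped ENNReal NNReal

private lemma wdr_pack (N : ℕ) {c r : ℝ} (hc : 1 ≤ c) (hr : 0 < r)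
    (y : EuclideanSpace ℝ (Fin N)) (T : Finset (EuclideanSpace ℝ (Fin N)))
    (hT : ∀ t ∈ T, dist t y < c * r)
    (hsep : (T : Set (EuclideanSpace ℝ (Fin N))).Pairwise fun a b => r ≤ dist a b) :
    (T.card : ℝ≥0∞) ≤ ENNReal.ofReal ((2 * (c + 1)) ^ N) := by
  set v : ℝ≥0∞ := volume (ball (0 : EuclideanSpace ℝ (Fin N)) 1) with hv
  have hv0 : v ≠ 0 := (measure_ball_pos volume 0 one_pos).ne'
  have hvtop : v ≠ ⊤ := measure_ball_lt_top.ne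
  have hfin : Module.finrank ℝ (EuclideanSpace ℝ (Fin N)) = N := finrank_euclideanSpace_fin
  have hrr : (0:ℝ) < r / 2 := by linarith
  have hdisj : (T : Set (EuclideanSpace ℝ (Fin N))).PairwiseDisjoint (fun t => ball t (r / 2)) := by
    intro a ha b hb hab
    exact ball_disjoint_ball (by simpa using hsep ha hb hab)
  have hmeas : ∀ t ∈ T, MeasurableSet (ball t (r / 2)) := fun t _ => measurableSet_ball
  have hsum : ∑ t ∈ T, volume (ball t (r / 2)) = volume (⋃ t ∈ T, ball t (r / 2)) :=
    (measure_biUnion_finset hdisj hmeas).symm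
  have hsub : (⋃ t ∈ T, ball t (r / 2)) ⊆ ball y ((c + 1) * r) := by
    intro z hz
    simp only [Set.mem_iUnion, mem_ball] at hz ⊢
    obtain ⟨t, ht, hzt⟩ := hz
    calc dist z y ≤ dist z t + dist t y := dist_triangle z t y
      _ < r / 2 + c * r := by exact add_lt_add hzt (hT t ht)
      _ ≤ (c + 1) * r := by nlinarith
  have hball : ∀ t : EuclideanSpace ℝ (Fin N), volume (ball t (r / 2)) = ENNReal.ofReal ((r/2) ^ N) * v := by
    intro t
    rw [Measure.addHaar_ball_of_pos volume t hrr, hfin]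
  have hbig : volume (ball y ((c + 1) * r)) = ENNReal.ofReal (((c+1)*r) ^ N) * v := by
    rw [Measure.addHaar_ball_of_pos volume y (by nlinarith), hfin]
  have hineq : (T.card : ℝ≥0∞) * (ENNReal.ofReal ((r/2) ^ N) * v)
      ≤ ENNReal.ofReal (((c+1)*r) ^ N) * v := by
    calc (T.card : ℝ≥0∞) * (ENNReal.ofReal ((r/2) ^ N) * v)
        = ∑ t ∈ T, volume (ball t (r / 2)) := by
          rw [Finset.sum_congr rfl fun t _ => hball t, Finset.sum_const, nsmul_eq_mul]
      _ = volume (⋃ t ∈ T, ball t (r / 2)) := hsum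
      _ ≤ volume (ball y ((c + 1) * r)) := measure_mono hsub
      _ = _ := hbig
  have hfactor : ENNReal.ofReal (((c+1)*r) ^ N)
      = ENNReal.ofReal ((2 * (c + 1)) ^ N) * ENNReal.ofReal ((r/2) ^ N) := by
    rw [← ENNReal.ofReal_mul (by positivity), ← mul_pow]
    ring_nf
  rw [hfactor] at hineq
  have ha0 : (ENNReal.ofReal ((r/2) ^ N) * v) ≠ 0 := by
    apply mul_ne_zero _ hv0
    simp only [ne_eq, ENNReal.ofReal_eq_zero, not_le]
    positivity
  have hatop : (ENNReal.ofReal ((r/2) ^ N) * v) ≠ ⊤ :=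
    ENNReal.mul_ne_top ENNReal.ofReal_ne_top hvtop
  rw [mul_assoc] at hineq
  exact (ENNReal.mul_le_mul_iff_left ha0 hatop).mp hineq

private lemma wdr_sum (N : ℕ) (μ : Measure (EuclideanSpace ℝ (Fin N)))
    [IsProbabilityMeasure μ] {c r : ℝ} (hc : 1 ≤ c) (hr : 0 < r)
    {S : Set (EuclideanSpace ℝ (Fin N))} (hSc : S.Countable)
    (hsep : S.Pairwise fun a b => r ≤ dist a b) :
    ∑' s : S, μ (ball (s : EuclideanSpace ℝ (Fin N)) (c * r))
      ≤ ENNReal.ofReal ((2 * (c + 1)) ^ N) := by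
  haveI := hSc.to_subtype
  have h1 : ∀ s : S, μ (ball (s : EuclideanSpace ℝ (Fin N)) (c * r))
      = ∫⁻ x, (ball (s : EuclideanSpace ℝ (Fin N)) (c * r)).indicator (fun _ => (1:ℝ≥0∞)) x ∂μ := by
    intro s
    rw [lintegral_indicator measurableSet_ball]
    simp
  calc ∑' s : S, μ (ball (s : EuclideanSpace ℝ (Fin N)) (c * r))
      = ∑' s : S, ∫⁻ x, (ball (s : EuclideanSpace ℝ (Fin N)) (c * r)).indicator
          (fun _ => (1:ℝ≥0∞)) x ∂μ := by exact tsum_congr h1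
    _ = ∫⁻ x, ∑' s : S, (ball (s : EuclideanSpace ℝ (Fin N)) (c * r)).indicator
          (fun _ => (1:ℝ≥0∞)) x ∂μ := by
        refine (lintegral_tsum fun s => ?_).symm
        exact (measurable_const.indicator measurableSet_ball).aemeasurable
    _ ≤ ∫⁻ _, ENNReal.ofReal ((2 * (c + 1)) ^ N) ∂μ := by
        refine lintegral_mono fun x => ?_
        refine Summable.tsum_le_of_sum_le ENNReal.summable fun T => ?_
        classical
        have : ∑ s ∈ T, (ball (s : EuclideanSpace ℝ (Fin N)) (c * r)).indicator
            (fun _ => (1:ℝ≥0∞)) x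
            = ((T.filter fun s : S => x ∈ ball (s : EuclideanSpace ℝ (Fin N)) (c * r)).card
              : ℝ≥0∞) := by
          rw [Finset.card_eq_sum_ones, Nat.cast_sum]
          rw [Finset.sum_filter]
          refine Finset.sum_congr rfl fun s _ => ?_
          by_cases hx : x ∈ ball (s : EuclideanSpace ℝ (Fin N)) (c * r) <;>
            simp [Set.indicator_apply, hx]
        rw [this]
        set T' := (T.filter fun s : S => x ∈ ball (s : EuclideanSpace ℝ (Fin N)) (c * r))
        have hinj : Set.InjOn (Subtype.val) (T' : Set S) := Subtype.val_injective.injOn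
        have hcard : T'.card = (T'.image Subtype.val).card :=
          (Finset.card_image_of_injOn hinj).symm
        rw [hcard]
        refine wdr_pack N hc hr x (T'.image Subtype.val) ?_ ?_
        · intro t ht
          simp only [T', Finset.mem_image, Finset.mem_filter] at ht
          obtain ⟨s, ⟨_, hs⟩, rfl⟩ := ht
          rw [mem_ball] at hs
          rw [dist_comm]
          exact hs
        · intro a ha b hb hab
          simp only [T', Finset.coe_image, Set.mem_image, Finset.mem_coe,
            Finset.mem_filter] at ha hb
          obtain ⟨sa, _, rfl⟩ := ha
          obtain ⟨sb, _, rfl⟩ := hb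
          exact hsep sa.2 sb.2 hab
    _ = ENNReal.ofReal ((2 * (c + 1)) ^ N) := by
        rw [lintegral_const, measure_univ, mul_one]

private lemma wdr_maximal_sep {E : Type*} [MetricSpace E] (A : Set E) {r : ℝ} (hr : 0 < r) :
    ∃ S ⊆ A, (S.Pairwise fun a b => r ≤ dist a b) ∧ ∀ a ∈ A, ∃ s ∈ S, dist a s < r := by
  have hz : ∀ ch ⊆ {S | S ⊆ A ∧ S.Pairwise fun a b => r ≤ dist a b},
      IsChain (· ⊆ ·) ch → ∃ ub ∈ {S | S ⊆ A ∧ S.Pairwise fun a b => r ≤ dist a b},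
        ∀ s ∈ ch, s ⊆ ub := by
    intro ch hch hchain
    refine ⟨⋃₀ ch, ⟨?_, ?_⟩, fun s hs => Set.subset_sUnion_of_mem hs⟩
    · exact Set.sUnion_subset fun s hs => (hch hs).1
    · intro a ha b hb hab
      obtain ⟨sa, hsa, ha'⟩ := ha
      obtain ⟨sb, hsb, hb'⟩ := hb
      rcases hchain.total hsa hsb with h | h
      · exact (hch hsb).2 (h ha') hb' hab
      · exact (hch hsa).2 ha' (h hb') hab
  obtain ⟨M, hM⟩ := zorn_subset {S | S ⊆ A ∧ S.Pairwise fun a b => r ≤ dist a b} hz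
  · refine ⟨M, hM.prop.1, hM.prop.2, fun a ha => ?_⟩
    by_contra hcon
    push_neg at hcon
    have haM : a ∉ M := fun h => absurd (hcon a h) (by simp [hr])
    have hins : insert a M ∈ {S | S ⊆ A ∧ S.Pairwise fun a b => r ≤ dist a b} := by
      constructor
      · exact Set.insert_subset ha hM.prop.1
      · haveI : Std.Symm (fun a b : E => r ≤ dist a b) := ⟨fun x y h => by rwa [dist_comm]⟩
        refine hM.prop.2.insert_of_symm ?_
        intro b hb _
        exact hcon b hb
    have := hM.2 hins (Set.subset_insert a M)
    exact haM (this (Set.mem_insert a M))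

private lemma wdr_cover (N : ℕ) (μ : Measure (EuclideanSpace ℝ (Fin N)))
    [IsProbabilityMeasure μ] {c r : ℝ} (hc : 1 ≤ c) (hr : 0 < r)
    (A : Set (EuclideanSpace ℝ (Fin N))) (d : ℝ≥0∞)
    (hA : ∀ x ∈ A, μ (ball x r) ≤ d * μ (ball x (c * r))) :
    μ A ≤ d * ENNReal.ofReal ((2 * (c + 1)) ^ N) := by
  obtain ⟨S, hSA, hsep, hcov⟩ := wdr_maximal_sep A hr
  have hSc : S.Countable := by
    have hdisj : S.PairwiseDisjoint fun s => ball s (r / 2) := by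
      intro a ha b hb hab
      exact ball_disjoint_ball (by simpa using hsep ha hb hab)
    exact hdisj.countable_of_isOpen (fun s _ => isOpen_ball)
      (fun s _ => ⟨s, mem_ball_self (by linarith)⟩)
  haveI := hSc.to_subtype
  have hsub : A ⊆ ⋃ s ∈ S, ball s r := by
    intro a ha
    obtain ⟨s, hs, hds⟩ := hcov a ha
    exact Set.mem_biUnion hs (by rwa [mem_ball])
  calc μ A ≤ μ (⋃ s ∈ S, ball s r) := measure_mono hsub
    _ ≤ ∑' s : S, μ (ball (s : EuclideanSpace ℝ (Fin N)) r) := measure_biUnion_le μ hSc _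
    _ ≤ ∑' s : S, d * μ (ball (s : EuclideanSpace ℝ (Fin N)) (c * r)) :=
        ENNReal.tsum_le_tsum fun s => hA s (hSA s.2)
    _ = d * ∑' s : S, μ (ball (s : EuclideanSpace ℝ (Fin N)) (c * r)) := ENNReal.tsum_mul_left
    _ ≤ d * ENNReal.ofReal ((2 * (c + 1)) ^ N) := by
        exact mul_le_mul_right (wdr_sum N μ hc hr hSc hsep) d

/-- Every Borel probability measure on `ℝ^N` is weakly diametrically regular:
for any `η > 1`, for μ-a.e. `x` and every `ε > 0`, there exists `δ > 0` such that
for all `0 < r < δ`, `μ(B(x, ηr)) ≤ μ(B(x, r)) · r^(-ε)`. -/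
theorem weakly_diametrically_regular (N : ℕ)
    (μ : Measure (EuclideanSpace ℝ (Fin N))) [IsProbabilityMeasure μ] :
    ∀ η : ℝ, 1 < η →
      ∀ᵐ x ∂μ, ∀ ε : ℝ, 0 < ε → ∃ δ > 0, ∀ r : ℝ, 0 < r → r < δ →
        μ (ball x (η * r)) ≤ μ (ball x r) * ENNReal.ofReal (r ^ (-ε)) := by
  intro η hη
  have hη0 : (0:ℝ) < η := lt_trans one_pos hη
  set c : ℝ := η ^ 2 with hc_def
  have hc : 1 ≤ c := by nlinarith
  set K : ℝ≥0∞ := ENNReal.ofReal ((2 * (c + 1)) ^ N) with hK_def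
  have hK_top : K ≠ ⊤ := ENNReal.ofReal_ne_top
  set rr : ℕ → ℝ := fun n => (η ^ n)⁻¹ with hrr_def
  have hrrpos : ∀ n, 0 < rr n := fun n => inv_pos.2 (pow_pos hη0 n)
  have hrrle1 : ∀ n, rr n ≤ 1 := fun n => inv_le_one_of_one_le₀ (one_le_pow₀ hη.le)
  have hrranti : ∀ m n : ℕ, m ≤ n → rr n ≤ rr m := by
    intro m n hmn
    exact inv_anti₀ (pow_pos hη0 m) (pow_le_pow_right₀ hη.le hmn)
  -- rpow computation helper
  have hpow : ∀ (m : ℕ) (a : ℝ), (rr m) ^ (-a) = η ^ ((m:ℝ) * a) := by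
    intro m a
    have h1 : rr m = η ^ (-(m:ℝ)) := by
      rw [hrr_def, Real.rpow_neg hη0.le, Real.rpow_natCast]
    rw [h1, ← Real.rpow_mul hη0.le, neg_mul_neg]
  have hpow' : ∀ (m : ℕ) (a : ℝ), (rr m) ^ (a : ℝ) = η ^ (-((m:ℝ) * a)) := by
    intro m a
    have := hpow m (-a)
    rwa [neg_neg, mul_neg] at this
  set γ : ℕ → ℝ := fun k => 1 / ((k:ℝ) + 1) / 2 with hγ_def
  have hγpos : ∀ k, 0 < γ k := by
    intro k
    have : (0:ℝ) < (k:ℝ) + 1 := by positivity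
    simp only [hγ_def]
    positivity
  set Bad : ℕ → ℕ → Set (EuclideanSpace ℝ (Fin N)) := fun k n =>
    {x | ¬ μ (ball x (c * rr n)) ≤ μ (ball x (rr n)) * ENNReal.ofReal ((rr n) ^ (-(γ k)))}
    with hBad_def
  -- measure bound on bad sets
  have hBadBound : ∀ k n, μ (Bad k n) ≤ ENNReal.ofReal ((rr n) ^ (γ k)) * K := by
    intro k n
    refine wdr_cover N μ hc (hrrpos n) _ _ ?_
    intro x hx
    simp only [hBad_def, Set.mem_setOf_eq, not_le] at hx
    have hDD : ENNReal.ofReal ((rr n) ^ (-(γ k))) * ENNReal.ofReal ((rr n) ^ (γ k)) = 1 := by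
      rw [← ENNReal.ofReal_mul (Real.rpow_nonneg (hrrpos n).le _),
        ← Real.rpow_add (hrrpos n), neg_add_cancel, Real.rpow_zero, ENNReal.ofReal_one]
    calc μ (ball x (rr n))
        = μ (ball x (rr n)) * (ENNReal.ofReal ((rr n) ^ (-(γ k)))
            * ENNReal.ofReal ((rr n) ^ (γ k))) := by rw [hDD, mul_one]
      _ = μ (ball x (rr n)) * ENNReal.ofReal ((rr n) ^ (-(γ k)))
            * ENNReal.ofReal ((rr n) ^ (γ k)) := by rw [mul_assoc]
      _ ≤ μ (ball x (c * rr n)) * ENNReal.ofReal ((rr n) ^ (γ k)) :=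
          mul_le_mul_left hx.le _
      _ = ENNReal.ofReal ((rr n) ^ (γ k)) * μ (ball x (c * rr n)) := mul_comm _ _
  -- summability
  have hsum : ∀ k, ∑' n, μ (Bad k n) ≠ ⊤ := by
    intro k
    set θ : ℝ := η ^ (-(γ k)) with hθ_def
    have hθ0 : 0 ≤ θ := Real.rpow_nonneg hη0.le _
    have hθ1 : θ < 1 := Real.rpow_lt_one_of_one_lt_of_neg hη (neg_neg_of_pos (hγpos k))
    have hθn : ∀ n : ℕ, (rr n) ^ (γ k) = θ ^ n := by
      intro n
      rw [hpow' n (γ k), hθ_def, ← Real.rpow_natCast (η ^ (-(γ k))) n,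
        ← Real.rpow_mul hη0.le]
      ring_nf
    have h1 : ∑' n, μ (Bad k n) ≤ (1 - ENNReal.ofReal θ)⁻¹ * K := by
      calc ∑' n, μ (Bad k n) ≤ ∑' n, ENNReal.ofReal ((rr n) ^ (γ k)) * K :=
            ENNReal.tsum_le_tsum fun n => hBadBound k n
        _ = (∑' n : ℕ, (ENNReal.ofReal θ) ^ n) * K := by
            rw [ENNReal.tsum_mul_right]
            congr 1
            refine tsum_congr fun n => ?_
            rw [hθn n, ENNReal.ofReal_pow hθ0]
        _ = (1 - ENNReal.ofReal θ)⁻¹ * K := by rw [ENNReal.tsum_geometric]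
    refine ne_top_of_le_ne_top ?_ h1
    refine ENNReal.mul_ne_top ?_ hK_top
    rw [ne_eq, ENNReal.inv_eq_top]
    refine (tsub_pos_iff_lt.2 ?_).ne'
    exact ENNReal.ofReal_lt_one.2 hθ1
  have hae : ∀ᵐ x ∂μ, ∀ k : ℕ, {n : ℕ | x ∈ Bad k n}.Finite :=
    ae_all_iff.2 fun k => ae_finite_setOf_mem (hsum k)
  filter_upwards [hae] with x hx
  intro ε hε
  obtain ⟨k, hk⟩ := exists_nat_one_div_lt hε
  have h2γ : 2 * γ k < ε := by
    have hgk : 2 * γ k = 1 / ((k:ℝ) + 1) := by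
      simp only [hγ_def]
      ring
    rw [hgk]
    exact hk
  obtain ⟨n₀, hn₀⟩ := (hx k).bddAbove
  set n₁ : ℕ := max (n₀ + 1) 1 with hn₁_def
  have hn₁a : n₀ + 1 ≤ n₁ := le_max_left _ _
  have hn₁b : 1 ≤ n₁ := le_max_right _ _
  refine ⟨rr n₁, hrrpos n₁, ?_⟩
  intro u hu0 huδ
  -- find the scale n
  have hex : ∃ m, rr m ≤ u := by
    obtain ⟨m, hm⟩ := pow_unbounded_of_one_lt u⁻¹ hη
    refine ⟨m, ?_⟩
    show (η ^ m)⁻¹ ≤ u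
    rw [inv_le_comm₀ (pow_pos hη0 m) hu0]
    exact hm.le
  set m₀ := Nat.find hex with hm₀_def
  have hfind : rr m₀ ≤ u := Nat.find_spec hex
  have hbelow : ∀ m, m < m₀ → u < rr m := fun m hm => lt_of_not_ge (Nat.find_min hex hm)
  have hn₁m₀ : n₁ < m₀ := by
    by_contra hcon
    push_neg at hcon
    exact absurd (le_trans (hrranti m₀ n₁ hcon) hfind) (not_le.2 huδ)
  have hm₀pos : 0 < m₀ := lt_of_le_of_lt (Nat.zero_le n₁) hn₁m₀
  obtain ⟨n, hnsucc⟩ : ∃ nn, nn + 1 = m₀ := ⟨m₀ - 1, Nat.succ_pred_eq_of_pos hm₀pos⟩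
  have hn1 : 1 ≤ n := by omega
  have hun : u < rr n := hbelow n (by omega)
  have hu1 : u ≤ 1 := hun.le.trans (hrrle1 n)
  have hgood : x ∉ Bad k (n + 1) := by
    intro hmem
    have : n + 1 ≤ n₀ := hn₀ hmem
    omega
  simp only [hBad_def, Set.mem_setOf_eq, not_not] at hgood
  -- main chain
  have hscale : c * rr (n + 1) = η * rr n := by
    rw [hrr_def, hc_def]
    simp only [pow_succ]
    have h1 : η ^ n ≠ 0 := (pow_pos hη0 n).ne'
    field_simp
  have hstep1 : μ (ball x (η * u)) ≤ μ (ball x (c * rr (n + 1))) := by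
    refine measure_mono (ball_subset_ball ?_)
    rw [hscale]
    exact mul_le_mul_of_nonneg_left hun.le hη0.le
  have hstep2 : μ (ball x (rr (n + 1))) ≤ μ (ball x u) :=
    measure_mono (ball_subset_ball (hnsucc ▸ hfind))
  have hexp : (rr (n + 1)) ^ (-(γ k)) ≤ u ^ (-ε) := by
    have e1 : (rr (n + 1)) ^ (-(γ k)) = η ^ (((n:ℝ) + 1) * γ k) := by
      rw [hpow (n + 1) (γ k)]
      push_cast
      ring_nf
    have e2 : η ^ (((n:ℝ) + 1) * γ k) ≤ η ^ ((n:ℝ) * (2 * γ k)) := by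
      refine Real.rpow_le_rpow_of_exponent_le hη.le ?_
      have : (1:ℝ) ≤ (n:ℝ) := by exact_mod_cast hn1
      nlinarith [hγpos k]
    have e3 : η ^ ((n:ℝ) * (2 * γ k)) = (rr n) ^ (-(2 * γ k)) := (hpow n (2 * γ k)).symm
    have e4 : (rr n) ^ (-(2 * γ k)) ≤ u ^ (-(2 * γ k)) := by
      rw [Real.rpow_neg (hrrpos n).le, Real.rpow_neg hu0.le]
      refine inv_anti₀ (Real.rpow_pos_of_pos hu0 _) ?_
      exact Real.rpow_le_rpow hu0.le hun.le (by positivity)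
    have e5 : u ^ (-(2 * γ k)) ≤ u ^ (-ε) :=
      Real.rpow_le_rpow_of_exponent_ge hu0 hu1 (by linarith)
    calc (rr (n + 1)) ^ (-(γ k)) = η ^ (((n:ℝ) + 1) * γ k) := e1
      _ ≤ η ^ ((n:ℝ) * (2 * γ k)) := e2
      _ = (rr n) ^ (-(2 * γ k)) := e3
      _ ≤ u ^ (-(2 * γ k)) := e4
      _ ≤ u ^ (-ε) := e5
  calc μ (ball x (η * u)) ≤ μ (ball x (c * rr (n + 1))) := hstep1
    _ ≤ μ (ball x (rr (n + 1))) * ENNReal.ofReal ((rr (n + 1)) ^ (-(γ k))) := hgood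
    _ ≤ μ (ball x u) * ENNReal.ofReal (u ^ (-ε)) :=
        mul_le_mul' hstep2 (ENNReal.ofReal_le_ofReal hexp)
end
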